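/- arXiv:1901.07515 — 5 statements merged into one kernel-verified Lean document; each statement's English description precedes it below -/
import Mathlib

section
/- For every n ≥ 1 and x ∈ [0,1], the normalized fourth absolute central binomial moment satisfies n^{-4} ∑_{k=0}^{n} |k - n x|^4 C(n,k) x^k (1-x)^{n-k} ≤ 4 δ_n(x)^2 Δ_n(x)^2, where δ_n(x) = √(x(1-x)/n) and Δ_n(x) = max{1/n, δ_n(x)}. -/
open Finset

/-- Cast of descending factorial as a real product. -/
lemma descFactorial_cast_real (k j : ℕ) :
    (Nat.descFactorial k j : ℝ) = ∏ i ∈ Finset.range j, ((k : ℝ) - i) := by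
  induction j with
  | zero => simp
  | succ j ih =>
    rw [Nat.descFactorial_succ, Finset.prod_range_succ]
    rcases le_or_gt j k with h | h
    · push_cast [h]
      rw [ih]; ring
    · have h2 : Nat.descFactorial k (j + 1) = 0 :=
        Nat.descFactorial_eq_zero_iff_lt.mpr (Nat.lt_succ_of_lt h)
      have : (∏ i ∈ Finset.range j, ((k : ℝ) - i)) = 0 :=
        Finset.prod_eq_zero (Finset.mem_range.mpr h) (by simp)
      have hkj : k - j = 0 := Nat.sub_eq_zero_of_le h.le
      simp [hkj, this]

/-- Factorial-moment identity for the binomial distribution. -/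
lemma desc_sum (n j : ℕ) (x : ℝ) :
    ∑ k ∈ Finset.range (n + 1),
        (Nat.descFactorial k j : ℝ) * ((n.choose k : ℝ) * x ^ k * (1 - x) ^ (n - k))
      = (Nat.descFactorial n j : ℝ) * x ^ j := by
  rcases le_or_gt j n with hj | hj
  · have hsplit : n + 1 = j + (n + 1 - j) := by omega
    rw [hsplit, Finset.sum_range_add]
    have h1 : ∑ i ∈ Finset.range j,
        (Nat.descFactorial i j : ℝ) * ((n.choose i : ℝ) * x ^ i * (1 - x) ^ (n - i)) = 0 := by
      apply Finset.sum_eq_zero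
      intro i hi
      rw [Nat.descFactorial_eq_zero_iff_lt.mpr (Finset.mem_range.mp hi)]
      simp
    rw [h1, zero_add]
    have h2 : ∀ i ∈ Finset.range (n + 1 - j),
        (Nat.descFactorial (j + i) j : ℝ) *
            ((n.choose (j + i) : ℝ) * x ^ (j + i) * (1 - x) ^ (n - (j + i)))
          = (Nat.descFactorial n j : ℝ) * x ^ j *
              (((n - j).choose i : ℝ) * x ^ i * (1 - x) ^ ((n - j) - i)) := by
      intro i hi
      have hi' : i ≤ n - j := by have := Finset.mem_range.mp hi; omega
      have hjin : j + i ≤ n := by omega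
      have key : Nat.descFactorial (j + i) j * n.choose (j + i)
          = Nat.descFactorial n j * (n - j).choose i := by
        rw [Nat.descFactorial_eq_factorial_mul_choose, Nat.descFactorial_eq_factorial_mul_choose]
        have h3 := Nat.choose_mul (n := n) (Nat.le_add_right j i)
        rw [mul_assoc, mul_comm ((j + i).choose j), h3]
        simp [Nat.add_sub_cancel_left, mul_assoc]
      have keyR : ((Nat.descFactorial (j + i) j : ℝ)) * (n.choose (j + i) : ℝ)
          = (Nat.descFactorial n j : ℝ) * ((n - j).choose i : ℝ) := by
        exact_mod_cast congrArg (Nat.cast (R := ℝ)) key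
      have hexp : n - (j + i) = (n - j) - i := by omega
      rw [hexp, pow_add]
      calc (Nat.descFactorial (j + i) j : ℝ) *
              ((n.choose (j + i) : ℝ) * (x ^ j * x ^ i) * (1 - x) ^ (n - j - i))
          = ((Nat.descFactorial (j + i) j : ℝ) * (n.choose (j + i) : ℝ)) * (x ^ j * x ^ i) *
              (1 - x) ^ (n - j - i) := by ring
        _ = ((Nat.descFactorial n j : ℝ) * ((n - j).choose i : ℝ)) * (x ^ j * x ^ i) *
              (1 - x) ^ (n - j - i) := by rw [keyR]
        _ = (Nat.descFactorial n j : ℝ) * x ^ j *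
              (((n - j).choose i : ℝ) * x ^ i * (1 - x) ^ ((n - j) - i)) := by ring
    rw [Finset.sum_congr rfl h2, ← Finset.mul_sum]
    have hbin : ∑ i ∈ Finset.range (n + 1 - j),
        ((n - j).choose i : ℝ) * x ^ i * (1 - x) ^ ((n - j) - i) = 1 := by
      have hr : n + 1 - j = (n - j) + 1 := by omega
      rw [hr]
      have hb := add_pow x (1 - x) (n - j)
      simp only [add_sub_cancel, one_pow] at hb
      calc ∑ i ∈ Finset.range ((n - j) + 1),
              ((n - j).choose i : ℝ) * x ^ i * (1 - x) ^ ((n - j) - i)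
          = ∑ i ∈ Finset.range ((n - j) + 1),
              x ^ i * (1 - x) ^ ((n - j) - i) * ((n - j).choose i : ℝ) :=
            Finset.sum_congr rfl (fun i _ => by ring)
        _ = 1 := hb.symm
    rw [hbin, mul_one]
  · have h1 : ∑ k ∈ Finset.range (n + 1),
        (Nat.descFactorial k j : ℝ) * ((n.choose k : ℝ) * x ^ k * (1 - x) ^ (n - k)) = 0 := by
      apply Finset.sum_eq_zero
      intro k hk
      have hk' : k < j := by have := Finset.mem_range.mp hk; omega
      rw [Nat.descFactorial_eq_zero_iff_lt.mpr hk']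
      simp
    rw [h1, Nat.descFactorial_eq_zero_iff_lt.mpr hj]
    simp

set_option maxHeartbeats 1000000 in
/-- Normalized fourth absolute central binomial moment bound:
`n⁻⁴ ∑_k |k - n x|⁴ p_{n,k}(x) ≤ 4 δ_n(x)² Δ_n(x)²`, where
`δ_n(x) = √(x(1-x)/n)` and `Δ_n(x) = max (1/n) (δ_n(x))`. -/
theorem binomial_fourth_abs_moment_bound (n : ℕ) (hn : 1 ≤ n) (x : ℝ)
    (hx : x ∈ Set.Icc (0:ℝ) 1) :
    (∑ k ∈ Finset.range (n + 1),
        |(k : ℝ) - n * x| ^ 4 * (n.choose k : ℝ) * x ^ k * (1 - x) ^ (n - k)) / (n : ℝ) ^ 4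
      ≤ 4 * (Real.sqrt (x * (1 - x) / n)) ^ 2 *
          (max (1 / (n : ℝ)) (Real.sqrt (x * (1 - x) / n))) ^ 2 := by
  obtain ⟨hx0, hx1⟩ := hx
  have hN1 : (1 : ℝ) ≤ (n : ℝ) := by exact_mod_cast hn
  have hN0 : (0 : ℝ) < (n : ℝ) := lt_of_lt_of_le one_pos hN1
  set N : ℝ := (n : ℝ) with hN
  set q : ℝ := x * (1 - x) with hq
  have hq0 : 0 ≤ q := mul_nonneg hx0 (by linarith)
  have hqN : 0 ≤ q / N := div_nonneg hq0 hN0.le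
  have hsq : (Real.sqrt (q / N)) ^ 2 = q / N := Real.sq_sqrt hqN
  set M : ℝ := max (1 / N) (Real.sqrt (q / N)) with hM
  set c : ℝ := N * x with hc
  set a3 : ℝ := 6 - 4 * c with ha3
  set a2 : ℝ := 7 - 12 * c + 6 * c ^ 2 with ha2
  set a1 : ℝ := 1 - 4 * c + 6 * c ^ 2 - 4 * c ^ 3 with ha1
  set a0 : ℝ := c ^ 4 with ha0
  have hterm : ∀ k ∈ Finset.range (n + 1),
      |(k : ℝ) - c| ^ 4 * (n.choose k : ℝ) * x ^ k * (1 - x) ^ (n - k)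
        = (Nat.descFactorial k 4 : ℝ) * ((n.choose k : ℝ) * x ^ k * (1 - x) ^ (n - k))
          + a3 * ((Nat.descFactorial k 3 : ℝ) * ((n.choose k : ℝ) * x ^ k * (1 - x) ^ (n - k)))
          + a2 * ((Nat.descFactorial k 2 : ℝ) * ((n.choose k : ℝ) * x ^ k * (1 - x) ^ (n - k)))
          + a1 * ((Nat.descFactorial k 1 : ℝ) * ((n.choose k : ℝ) * x ^ k * (1 - x) ^ (n - k)))
          + a0 * ((Nat.descFactorial k 0 : ℝ) * ((n.choose k : ℝ) * x ^ k * (1 - x) ^ (n - k))) := by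
    intro k _
    have habs : |(k : ℝ) - c| ^ 4 = ((k : ℝ) - c) ^ 4 := Even.pow_abs (by decide) _
    rw [habs, ha3, ha2, ha1, ha0]
    simp only [descFactorial_cast_real, Finset.prod_range_succ, Finset.prod_range_zero]
    push_cast
    ring
  rw [Finset.sum_congr rfl hterm]
  simp only [Finset.sum_add_distrib, ← Finset.mul_sum]
  rw [desc_sum n 4 x, desc_sum n 3 x, desc_sum n 2 x, desc_sum n 1 x, desc_sum n 0 x]
  -- the fourth central moment
  have hT : (Nat.descFactorial n 4 : ℝ) * x ^ 4
        + a3 * ((Nat.descFactorial n 3 : ℝ) * x ^ 3)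
        + a2 * ((Nat.descFactorial n 2 : ℝ) * x ^ 2)
        + a1 * ((Nat.descFactorial n 1 : ℝ) * x ^ 1)
        + a0 * ((Nat.descFactorial n 0 : ℝ) * x ^ 0)
      = N * q + 3 * N * (N - 2) * q ^ 2 := by
    rw [ha3, ha2, ha1, ha0, hc, hq]
    simp only [descFactorial_cast_real, Finset.prod_range_succ, Finset.prod_range_zero, ← hN]
    push_cast
    ring
  rw [hT, hsq]
  -- now the inequality
  have hMd : 1 / N ≤ M := le_max_left _ _
  have hMs : Real.sqrt (q / N) ≤ M := le_max_right _ _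
  have hM0 : 0 ≤ M := le_trans (Real.sqrt_nonneg _) hMs
  have hM1 : 1 ≤ N ^ 2 * M ^ 2 := by
    have h1 : (1 / N) ^ 2 ≤ M ^ 2 := pow_le_pow_left₀ (by positivity) hMd 2
    rw [div_pow, one_pow, div_le_iff₀ (by positivity)] at h1
    linarith [h1]
  have hM2 : q ≤ N * M ^ 2 := by
    have h1 : (Real.sqrt (q / N)) ^ 2 ≤ M ^ 2 := pow_le_pow_left₀ (Real.sqrt_nonneg _) hMs 2
    rw [hsq, div_le_iff₀ hN0] at h1
    linarith [h1]
  rw [div_le_iff₀ (by positivity)]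
  have hA : N * q ≤ N ^ 3 * q * M ^ 2 := by nlinarith [mul_le_mul_of_nonneg_left hM1 (mul_nonneg hN0.le hq0)]
  have hB : 3 * N * (N - 2) * q ^ 2 ≤ 3 * N ^ 3 * q * M ^ 2 := by
    have h1 : 3 * N * (N - 2) * q ^ 2 ≤ 3 * N ^ 2 * q ^ 2 := by
      nlinarith [mul_nonneg hN0.le (sq_nonneg q)]
    have h2 := mul_le_mul_of_nonneg_left hM2 (show (0:ℝ) ≤ 3 * N ^ 2 * q by positivity)
    nlinarith [h1, h2]
  have hR : 4 * (q / N) * M ^ 2 * N ^ 4 = 4 * N ^ 3 * q * M ^ 2 := by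
    field_simp
  rw [hR]
  linarith
end

section
/- For every n ≥ 1 and x ∈ [0,1], the normalized third absolute central binomial moment satisfies n^{-3} ∑_{k=0}^{n} |k - n x|^3 C(n,k) x^k (1-x)^{n-k} ≤ 2 δ_n(x)^2 Δ_n(x), where δ_n(x) = √(x(1-x)/n) and Δ_n(x) = max{1/n, δ_n(x)}. -/
open Finset

private lemma sum_binom_one (x : ℝ) (n : ℕ) :
    ∑ k ∈ range (n+1), (n.choose k : ℝ) * x ^ k * (1-x) ^ (n-k) = 1 := by
  have h := add_pow x (1-x) n
  have hx : x + (1-x) = 1 := by ring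
  rw [hx, one_pow] at h
  refine Eq.trans ?_ h.symm
  exact Finset.sum_congr rfl (fun k _ => by ring)

private lemma momR (x : ℝ) : ∀ (j n : ℕ),
    ∑ k ∈ range (n+1),
        (∏ i ∈ range j, ((k:ℝ) - i)) * (n.choose k : ℝ) * x ^ k * (1-x) ^ (n-k)
      = (∏ i ∈ range j, ((n:ℝ) - i)) * x ^ j := by
  intro j
  induction j with
  | zero => intro n; simpa using sum_binom_one x n
  | succ j ih =>
    intro n
    cases n with
    | zero =>
      simp [Finset.prod_range_succ']
    | succ m =>
      rw [Finset.sum_range_succ']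
      have t0 : (∏ i ∈ range (j+1), (((0:ℕ):ℝ) - (i:ℝ))) *
          ((m+1).choose 0 : ℝ) * x ^ 0 * (1-x) ^ (m+1-0) = 0 := by
        have : (∏ i ∈ range (j+1), (((0:ℕ):ℝ) - (i:ℝ))) = 0 :=
          Finset.prod_eq_zero (Finset.mem_range.2 (Nat.succ_pos j)) (by simp)
        rw [this]; ring
      rw [t0, add_zero]
      have key : ∀ i ∈ range (m+1),
          (∏ t ∈ range (j+1), (((i+1:ℕ):ℝ) - (t:ℝ))) * ((m+1).choose (i+1) : ℝ)
              * x ^ (i+1) * (1-x) ^ (m+1-(i+1))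
          = ((m:ℝ)+1) * x *
            ((∏ t ∈ range j, ((i:ℝ) - (t:ℝ))) * (m.choose i : ℝ) * x ^ i * (1-x) ^ (m-i)) := by
        intro i _
        have hch : ((i:ℝ)+1) * ((m+1).choose (i+1) : ℝ) = ((m:ℝ)+1) * (m.choose i : ℝ) := by
          have h : ((m+1) * m.choose i : ℕ) = ((m+1).choose (i+1) * (i+1) : ℕ) := by
            simpa [Nat.succ_eq_add_one] using Nat.add_one_mul_choose_eq m i
          have h2 : (((m+1) * m.choose i : ℕ) : ℝ) = (((m+1).choose (i+1) * (i+1) : ℕ) : ℝ) := by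
            exact_mod_cast h
          push_cast at h2
          linarith
        have hprod : (∏ t ∈ range (j+1), (((i+1:ℕ):ℝ) - (t:ℝ)))
            = (∏ t ∈ range j, ((i:ℝ) - (t:ℝ))) * ((i:ℝ)+1) := by
          rw [Finset.prod_range_succ']
          push_cast
          have e1 : ∀ t ∈ range j, ((i:ℝ)+1) - ((t:ℝ)+1) = (i:ℝ) - t := fun t _ => by ring
          rw [Finset.prod_congr rfl e1]
          ring
        have hsub : m + 1 - (i+1) = m - i := by omega
        rw [hprod, hsub]
        linear_combination (∏ t ∈ range j, ((i:ℝ) - (t:ℝ))) * x^(i+1) * (1-x)^(m-i) * hch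
      rw [Finset.sum_congr rfl key, ← Finset.mul_sum, ih m]
      rw [Finset.prod_range_succ']
      push_cast
      have : (∏ t ∈ range j, (((m:ℝ)+1) - ((t:ℝ)+1))) = ∏ t ∈ range j, ((m:ℝ) - t) :=
        Finset.prod_congr rfl (fun t _ => by ring)
      rw [this]
      ring

/-- Normalized third absolute central binomial moment bound:
`n⁻³ ∑_k |k - n x|³ p_{n,k}(x) ≤ 2 δ_n(x)² Δ_n(x)`, where
`δ_n(x) = √(x(1-x)/n)` and `Δ_n(x) = max (1/n) (δ_n(x))`. -/
theorem binomial_third_abs_moment_bound (n : ℕ) (hn : 1 ≤ n) (x : ℝ)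
    (hx : x ∈ Set.Icc (0:ℝ) 1) :
    (∑ k ∈ Finset.range (n + 1),
        |(k : ℝ) - n * x| ^ 3 * (n.choose k : ℝ) * x ^ k * (1 - x) ^ (n - k)) / (n : ℝ) ^ 3
      ≤ 2 * (Real.sqrt (x * (1 - x) / n)) ^ 2 *
          (max (1 / (n : ℝ)) (Real.sqrt (x * (1 - x) / n))) := by
  obtain ⟨hx0, hx1⟩ := hx
  have h1x : (0:ℝ) ≤ 1 - x := by linarith
  have hNpos : (0:ℝ) < (n:ℝ) := by exact_mod_cast Nat.pos_of_ne_zero (by omega)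
  set N : ℝ := (n:ℝ) with hN
  set q : ℝ := x * (1 - x) with hqdef
  have hq : 0 ≤ q := mul_nonneg hx0 h1x
  set D : ℝ := max (1 / N) (Real.sqrt (q / N)) with hDdef
  have hD1 : 1 / N ≤ D := le_max_left _ _
  have hD2 : Real.sqrt (q / N) ≤ D := le_max_right _ _
  have hDnn : (0:ℝ) ≤ D := le_trans (by positivity) hD1
  have hqN : (0:ℝ) ≤ q / N := div_nonneg hq hNpos.le
  have hsq : Real.sqrt (q / N) ^ 2 = q / N := Real.sq_sqrt hqN
  -- moment computations
  have hS2 : ∑ k ∈ range (n+1), ((k:ℝ) - N * x)^2 * (n.choose k : ℝ) * x ^ k * (1-x) ^ (n-k)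
      = N * q := by
    have e : ∀ k ∈ range (n+1),
        ((k:ℝ) - N * x)^2 * (n.choose k : ℝ) * x ^ k * (1-x) ^ (n-k)
        = (∏ i ∈ range 2, ((k:ℝ) - i)) * (n.choose k : ℝ) * x ^ k * (1-x) ^ (n-k)
          + (1 - 2*N*x) * ((∏ i ∈ range 1, ((k:ℝ) - i)) * (n.choose k : ℝ) * x ^ k * (1-x) ^ (n-k))
          + (N*x)^2 * ((∏ i ∈ range 0, ((k:ℝ) - i)) * (n.choose k : ℝ) * x ^ k * (1-x) ^ (n-k)) := by
      intro k _
      simp only [Finset.prod_range_succ, Finset.prod_range_zero]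
      push_cast
      ring
    rw [Finset.sum_congr rfl e, Finset.sum_add_distrib, Finset.sum_add_distrib,
      ← Finset.mul_sum, ← Finset.mul_sum, momR, momR, momR]
    simp only [Finset.prod_range_succ, Finset.prod_range_zero]
    push_cast
    ring
  have hS4 : ∑ k ∈ range (n+1), ((k:ℝ) - N * x)^4 * (n.choose k : ℝ) * x ^ k * (1-x) ^ (n-k)
      = N * q * (1 + 3*(N-2)*q) := by
    have e : ∀ k ∈ range (n+1),
        ((k:ℝ) - N * x)^4 * (n.choose k : ℝ) * x ^ k * (1-x) ^ (n-k)
        = (∏ i ∈ range 4, ((k:ℝ) - i)) * (n.choose k : ℝ) * x ^ k * (1-x) ^ (n-k)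
          + (6 - 4*N*x) * ((∏ i ∈ range 3, ((k:ℝ) - i)) * (n.choose k : ℝ) * x ^ k * (1-x) ^ (n-k))
          + (7 - 12*N*x + 6*(N*x)^2) * ((∏ i ∈ range 2, ((k:ℝ) - i)) * (n.choose k : ℝ) * x ^ k * (1-x) ^ (n-k))
          + (1 - 4*N*x + 6*(N*x)^2 - 4*(N*x)^3) * ((∏ i ∈ range 1, ((k:ℝ) - i)) * (n.choose k : ℝ) * x ^ k * (1-x) ^ (n-k))
          + (N*x)^4 * ((∏ i ∈ range 0, ((k:ℝ) - i)) * (n.choose k : ℝ) * x ^ k * (1-x) ^ (n-k)) := by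
      intro k _
      simp only [Finset.prod_range_succ, Finset.prod_range_zero]
      push_cast
      ring
    rw [Finset.sum_congr rfl e, Finset.sum_add_distrib, Finset.sum_add_distrib,
      Finset.sum_add_distrib, Finset.sum_add_distrib,
      ← Finset.mul_sum, ← Finset.mul_sum, ← Finset.mul_sum, ← Finset.mul_sum,
      momR, momR, momR, momR, momR]
    simp only [Finset.prod_range_succ, Finset.prod_range_zero]
    push_cast
    ring
  -- Cauchy-Schwarz
  set T3 : ℝ := ∑ k ∈ Finset.range (n + 1),
      |(k : ℝ) - N * x| ^ 3 * (n.choose k : ℝ) * x ^ k * (1 - x) ^ (n - k) with hT3def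
  have hterm : ∀ k : ℕ, (0:ℝ) ≤ (n.choose k : ℝ) * x ^ k * (1 - x) ^ (n - k) :=
    fun k => mul_nonneg (mul_nonneg (Nat.cast_nonneg _) (pow_nonneg hx0 _)) (pow_nonneg h1x _)
  have hT3nn : 0 ≤ T3 := Finset.sum_nonneg fun k _ =>
    mul_nonneg (mul_nonneg (mul_nonneg (pow_nonneg (abs_nonneg _) 3) (Nat.cast_nonneg _))
      (pow_nonneg hx0 _)) (pow_nonneg h1x _)
  have hCS : T3 ^ 2 ≤ (N * q) * (N * q * (1 + 3*(N-2)*q)) := by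
    rw [← hS4, ← hS2]
    refine Finset.sum_sq_le_sum_mul_sum_of_sq_eq_mul (range (n+1))
      (f := fun k => ((k:ℝ) - N * x)^2 * (n.choose k : ℝ) * x ^ k * (1-x) ^ (n-k))
      (g := fun k => ((k:ℝ) - N * x)^4 * (n.choose k : ℝ) * x ^ k * (1-x) ^ (n-k))
      (fun k _ => mul_nonneg (mul_nonneg (mul_nonneg (sq_nonneg _) (Nat.cast_nonneg _))
        (pow_nonneg hx0 _)) (pow_nonneg h1x _))
      (fun k _ => mul_nonneg (mul_nonneg (mul_nonneg (by positivity) (Nat.cast_nonneg _))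
        (pow_nonneg hx0 _)) (pow_nonneg h1x _))
      ?_
    intro k _
    have ha3 : (|(k:ℝ) - N * x| ^ 3) ^ 2 = (((k:ℝ) - N * x) ^ 2) ^ 3 := by
      calc (|(k:ℝ) - N * x| ^ 3) ^ 2 = (|(k:ℝ) - N * x| ^ 2) ^ 3 := by ring
        _ = (((k:ℝ) - N * x) ^ 2) ^ 3 := by rw [sq_abs]
    linear_combination ((n.choose k : ℝ) * x ^ k * (1-x) ^ (n-k))^2 * ha3
  have hDq : q ≤ D^2 * N := by
    have h := pow_le_pow_left₀ (Real.sqrt_nonneg (q/N)) hD2 2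
    rw [hsq] at h
    calc q = (q/N)*N := by field_simp
      _ ≤ D^2 * N := mul_le_mul_of_nonneg_right h hNpos.le
  have hDn : 1 ≤ D^2 * N^2 := by
    have h := pow_le_pow_left₀ (by positivity : (0:ℝ) ≤ 1/N) hD1 2
    calc (1:ℝ) = (1/N)^2 * N^2 := by field_simp
      _ ≤ D^2 * N^2 := mul_le_mul_of_nonneg_right h (by positivity)
  have hR : (0:ℝ) ≤ 2*q*D*N^2 := by
    have : (0:ℝ) ≤ N^2 := sq_nonneg N
    nlinarith [mul_nonneg (mul_nonneg hq hDnn) this]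
  have hsq2 : T3^2 ≤ (2*q*D*N^2)^2 := by
    have h1 : (0:ℝ) ≤ N^2*q^2*(D^2*N^2 - 1) :=
      mul_nonneg (by positivity) (by linarith)
    have h2 : (0:ℝ) ≤ 3*(N^3*q^2)*(D^2*N - q) :=
      mul_nonneg (by positivity) (by linarith)
    have h3 : (0:ℝ) ≤ 6*(N^2*q^2)*q := mul_nonneg (by positivity) hq
    nlinarith [hCS, h1, h2, h3]
  have final : T3 ≤ 2*q*D*N^2 := by
    have h' := Real.sqrt_le_sqrt hsq2
    rwa [Real.sqrt_sq hT3nn, Real.sqrt_sq hR] at h'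
  rw [hsq, div_le_iff₀ (by positivity : (0:ℝ) < N^3)]
  have heq : (2*(q/N)*D)*N^3 = 2*q*D*N^2 := by
    field_simp
  linarith [heq.ge]
end

section
/- Let f be a continuous function on [0,1] with modulus of continuity ω(f,h) = sup_{|s-t|≤h} |f(s)-f(t)|. Then for all x ∈ [0,1] and n ≥ 1, the Bernstein polynomial B_n f(x) = ∑_{k=0}^{n} f(k/n) C(n,k) x^k (1-x)^{n-k} satisfies |f(x) - B_n f(x)| ≤ 2 ω(f, δ_n(x)), where δ_n(x) = √(x(1-x)/n). -/
open scoped unitInterval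

/-- The modulus of continuity of `f` on `[0,1]`:
`ω(f,h) = sup { |f s - f t| : s, t ∈ [0,1], |s - t| ≤ h }`. -/
noncomputable def modCont (f : ℝ → ℝ) (h : ℝ) : ℝ :=
  sSup {y : ℝ | ∃ s ∈ Set.Icc (0:ℝ) 1, ∃ t ∈ Set.Icc (0:ℝ) 1, |s - t| ≤ h ∧ y = |f s - f t|}

lemma modCont_bddAbove (f : ℝ → ℝ) (hf : ContinuousOn f (Set.Icc (0:ℝ) 1)) (h : ℝ) :
    BddAbove {y : ℝ | ∃ s ∈ Set.Icc (0:ℝ) 1, ∃ t ∈ Set.Icc (0:ℝ) 1,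
      |s - t| ≤ h ∧ y = |f s - f t|} := by
  obtain ⟨M, hM⟩ := isCompact_Icc.exists_bound_of_continuousOn hf
  refine ⟨2 * M, ?_⟩
  rintro y ⟨s, hs, t, ht, -, rfl⟩
  have h1 := hM s hs
  have h2 := hM t ht
  simp only [Real.norm_eq_abs] at h1 h2
  calc |f s - f t| ≤ |f s| + |f t| := abs_sub _ _
    _ ≤ 2 * M := by linarith

lemma le_modCont (f : ℝ → ℝ) (hf : ContinuousOn f (Set.Icc (0:ℝ) 1)) {h s t : ℝ}
    (hs : s ∈ Set.Icc (0:ℝ) 1) (ht : t ∈ Set.Icc (0:ℝ) 1) (hst : |s - t| ≤ h) :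
    |f s - f t| ≤ modCont f h :=
  le_csSup (modCont_bddAbove f hf h) ⟨s, hs, t, ht, hst, rfl⟩

lemma modCont_nonneg (f : ℝ → ℝ) (hf : ContinuousOn f (Set.Icc (0:ℝ) 1)) {h : ℝ}
    (h0 : 0 ≤ h) : 0 ≤ modCont f h := by
  have := le_modCont f hf (h := h) (s := 0) (t := 0) (by norm_num) (by norm_num)
    (by simpa using h0)
  simpa using this

/-- Chaining: `|f s - f t| ≤ (1 + |s-t|/δ) ω(δ)`. -/
lemma modCont_chain (f : ℝ → ℝ) (hf : ContinuousOn f (Set.Icc (0:ℝ) 1)) {δ : ℝ}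
    (hδ : 0 < δ) {s t : ℝ} (hs : s ∈ Set.Icc (0:ℝ) 1) (ht : t ∈ Set.Icc (0:ℝ) 1) :
    |f s - f t| ≤ (1 + |s - t| / δ) * modCont f δ := by
  have hω : 0 ≤ modCont f δ := modCont_nonneg f hf hδ.le
  rcases eq_or_ne s t with rfl | hne
  · simp only [sub_self, abs_zero]
    positivity
  set m : ℕ := ⌈|s - t| / δ⌉₊ with hm
  have hst0 : 0 < |s - t| := abs_pos.mpr (sub_ne_zero.mpr hne)
  have hmpos : 0 < m := Nat.ceil_pos.mpr (by positivity)
  have hmR : (0:ℝ) < m := by exact_mod_cast hmpos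
  set u : ℕ → ℝ := fun i => t + (i : ℝ) / m * (s - t) with hu
  have hui : ∀ i : ℕ, i ≤ m → u i ∈ Set.Icc (0:ℝ) 1 := by
    intro i hi
    have h1 : (0:ℝ) ≤ (i : ℝ) / m := by positivity
    have h2 : (i : ℝ) / m ≤ 1 := by
      rw [div_le_one hmR]; exact_mod_cast hi
    obtain ⟨hs0, hs1⟩ := hs
    obtain ⟨ht0, ht1⟩ := ht
    constructor
    · simp only [hu]; nlinarith
    · simp only [hu]; nlinarith
  have hstep : ∀ i : ℕ, i < m → |f (u (i+1)) - f (u i)| ≤ modCont f δ := by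
    intro i hi
    apply le_modCont f hf (hui _ hi) (hui _ hi.le)
    have hud : u (i+1) - u i = (s - t) / m := by
      simp only [hu]; push_cast; ring
    rw [hud, abs_div, abs_of_pos hmR, div_le_iff₀ hmR]
    have hcl := Nat.le_ceil (|s - t| / δ)
    rw [← hm] at hcl
    rw [div_le_iff₀ hδ] at hcl
    linarith
  have htel : f s - f t = ∑ i ∈ Finset.range m, (f (u (i+1)) - f (u i)) := by
    rw [Finset.sum_range_sub (fun i => f (u i))]
    congr 2
    · simp only [hu]; rw [div_self (ne_of_gt hmR)]; ring
    · simp [hu]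
  calc |f s - f t| = |∑ i ∈ Finset.range m, (f (u (i+1)) - f (u i))| := by rw [htel]
    _ ≤ ∑ i ∈ Finset.range m, |f (u (i+1)) - f (u i)| :=
        Finset.abs_sum_le_sum_abs _ _
    _ ≤ ∑ _i ∈ Finset.range m, modCont f δ :=
        Finset.sum_le_sum fun i hi => hstep i (Finset.mem_range.mp hi)
    _ = (m : ℝ) * modCont f δ := by rw [Finset.sum_const, Finset.card_range]; simp
    _ ≤ (1 + |s - t| / δ) * modCont f δ := by
        apply mul_le_mul_of_nonneg_right _ hω
        have hcl := Nat.ceil_lt_add_one (a := |s - t| / δ) (by positivity)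
        rw [← hm] at hcl
        linarith

/-- Bernstein polynomial approximation via the modulus of continuity:
`|f(x) - B_n f(x)| ≤ 2 ω(f, δ_n(x))` with `δ_n(x) = √(x(1-x)/n)`. -/
theorem bernstein_modulus_bound (f : ℝ → ℝ) (hf : ContinuousOn f (Set.Icc (0:ℝ) 1))
    (n : ℕ) (hn : 1 ≤ n) (x : ℝ) (hx : x ∈ Set.Icc (0:ℝ) 1) :
    |f x - ∑ k ∈ Finset.range (n + 1),
        f ((k : ℝ) / n) * (n.choose k : ℝ) * x ^ k * (1 - x) ^ (n - k)|
      ≤ 2 * modCont f (Real.sqrt (x * (1 - x) / n)) := by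
  obtain ⟨hx0, hx1⟩ := hx
  have hn0 : n ≠ 0 := Nat.one_le_iff_ne_zero.mp hn
  have hnR : (0:ℝ) < n := by exact_mod_cast Nat.pos_of_ne_zero hn0
  set δ := Real.sqrt (x * (1 - x) / n) with hδdef
  have hω : 0 ≤ modCont f δ := modCont_nonneg f hf (Real.sqrt_nonneg _)
  rcases eq_or_lt_of_le (show (0:ℝ) ≤ x * (1 - x) / n by
      have : 0 ≤ 1 - x := by linarith
      positivity) with hzero | hpos
  · -- degenerate case: x = 0 or x = 1, Bernstein sum equals f x
    have hx01 : x = 0 ∨ x = 1 := by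
      have h := hzero.symm
      rw [div_eq_zero_iff] at h
      rcases h with h | h
      · rcases mul_eq_zero.mp h with h | h
        · exact Or.inl h
        · exact Or.inr (by linarith)
      · exact absurd h (ne_of_gt hnR)
    have hB : ∑ k ∈ Finset.range (n + 1),
        f ((k : ℝ) / n) * (n.choose k : ℝ) * x ^ k * (1 - x) ^ (n - k) = f x := by
      rcases hx01 with rfl | rfl
      · rw [Finset.sum_eq_single 0]
        · simp
        · intro k hk hk0
          simp [zero_pow hk0]
        · simp
      · rw [Finset.sum_eq_single n]
        · simp [div_self (ne_of_gt hnR)]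
        · intro k hk hkn
          have : n - k ≠ 0 := by
            have := Nat.lt_succ_iff.mp (Finset.mem_range.mp hk)
            omega
          simp [zero_pow this]
        · intro h; exact absurd (Finset.self_mem_range_succ n) h
    rw [hB, sub_self, abs_zero]
    positivity
  · -- main case
    have hδ : 0 < δ := Real.sqrt_pos.mpr hpos
    have hδ2 : δ ^ 2 = x * (1 - x) / n := Real.sq_sqrt hpos.le
    set p : ℕ → ℝ := fun k => (n.choose k : ℝ) * x ^ k * (1 - x) ^ (n - k) with hp
    have hp0 : ∀ k, 0 ≤ p k := fun k => by
      have : 0 ≤ 1 - x := by linarith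
      positivity
    have hsum : ∑ k ∈ Finset.range (n+1), p k = 1 := by
      have h := bernstein.probability n ⟨x, ⟨hx0, hx1⟩⟩
      simp only [bernstein_apply] at h
      rw [← Fin.sum_univ_eq_sum_range]
      exact h
    have hvar : ∑ k ∈ Finset.range (n+1), (x - k/n)^2 * p k = x * (1 - x) / n := by
      have h := bernstein.variance hn0 (⟨x, ⟨hx0, hx1⟩⟩ : I)
      simp only [bernstein_apply, bernstein.z] at h
      rw [← Fin.sum_univ_eq_sum_range]
      convert h using 2
    have hknI : ∀ k ∈ Finset.range (n+1), ((k:ℝ)/n) ∈ Set.Icc (0:ℝ) 1 := by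
      intro k hk
      have hk' : (k:ℝ) ≤ n := by
        exact_mod_cast Nat.lt_succ_iff.mp (Finset.mem_range.mp hk)
      exact ⟨by positivity, by rw [div_le_one hnR]; exact hk'⟩
    have key : f x - ∑ k ∈ Finset.range (n + 1),
        f ((k : ℝ) / n) * (n.choose k : ℝ) * x ^ k * (1 - x) ^ (n - k)
        = ∑ k ∈ Finset.range (n+1), (f x - f ((k:ℝ)/n)) * p k := by
      have e : ∑ k ∈ Finset.range (n+1), (f x - f ((k:ℝ)/n)) * p k
          = f x * ∑ k ∈ Finset.range (n+1), p k
            - ∑ k ∈ Finset.range (n+1),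
              f ((k : ℝ) / n) * (n.choose k : ℝ) * x ^ k * (1 - x) ^ (n - k) := by
        rw [Finset.mul_sum, ← Finset.sum_sub_distrib]
        exact Finset.sum_congr rfl fun k _ => by simp only [hp]; ring
      rw [e, hsum, mul_one]
    rw [key]
    calc |∑ k ∈ Finset.range (n+1), (f x - f ((k:ℝ)/n)) * p k|
        ≤ ∑ k ∈ Finset.range (n+1), |f x - f ((k:ℝ)/n)| * p k := by
          refine (Finset.abs_sum_le_sum_abs _ _).trans (le_of_eq ?_)
          exact Finset.sum_congr rfl fun k _ => by
            rw [abs_mul, abs_of_nonneg (hp0 k)]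
      _ ≤ ∑ k ∈ Finset.range (n+1),
            (3/2 + (x - (k:ℝ)/n)^2 / (2 * δ^2)) * modCont f δ * p k := by
          refine Finset.sum_le_sum fun k hk => ?_
          refine mul_le_mul_of_nonneg_right ?_ (hp0 k)
          refine (modCont_chain f hf hδ ⟨hx0, hx1⟩ (hknI k hk)).trans ?_
          refine mul_le_mul_of_nonneg_right ?_ hω
          set d := x - (k:ℝ)/n with hd
          have hδ2pos : (0:ℝ) < 2 * δ^2 := by positivity
          have h3 : |d| * (2*δ) ≤ δ^2 + d^2 := by
            nlinarith [sq_nonneg (|d| - δ), sq_abs d]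
          have h4 : |d|/δ ≤ (δ^2 + d^2)/(2*δ^2) := by
            rw [div_le_div_iff₀ hδ hδ2pos]
            nlinarith [h3, hδ]
          have h5 : (3:ℝ)/2 + d^2/(2*δ^2) = 1 + (δ^2 + d^2)/(2*δ^2) := by
            field_simp; ring
          rw [h5]
          linarith
      _ = 3/2 * modCont f δ * (∑ k ∈ Finset.range (n+1), p k)
            + modCont f δ / (2 * δ^2)
              * ∑ k ∈ Finset.range (n+1), (x - (k:ℝ)/n)^2 * p k := by
          rw [Finset.mul_sum, Finset.mul_sum, ← Finset.sum_add_distrib]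
          exact Finset.sum_congr rfl fun k _ => by ring
      _ = 2 * modCont f δ := by
          rw [hsum, hvar, ← hδ2]
          field_simp
          ring
end

section
/- Let f : [0,1] → ℝ be α-Hölder continuous with constant L, i.e., |f(s)-f(t)| ≤ L|s-t|^α for all s,t ∈ [0,1] with 0 < α ≤ 1. Then for all x ∈ [0,1] and n ≥ 1, |f(x) - B_n f(x)| ≤ 2 L (x(1-x)/n)^{α/2}, where B_n f is the Bernstein polynomial of f. In particular sup_x |f(x) - B_n f(x)| ≤ 2 L (4n)^{-α/2}. -/
open Finset

private lemma holder_pointwise {α δ : ℝ} (hα0 : 0 < α) (hα1 : α ≤ 1) (hδ : 0 < δ) (t : ℝ) :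
    |t| ^ α ≤ δ ^ α + δ ^ (α - 2) * t ^ 2 := by
  have hδα2 : 0 < δ ^ (α - 2) := Real.rpow_pos_of_pos hδ _
  rcases le_or_gt |t| δ with h | h
  · have h1 : |t| ^ α ≤ δ ^ α := Real.rpow_le_rpow (abs_nonneg t) h hα0.le
    nlinarith [sq_nonneg t]
  · have ht0 : 0 < |t| := lt_trans hδ h
    have h1 : |t| ^ α = |t| ^ (α - 2) * |t| ^ (2 : ℝ) := by
      rw [← Real.rpow_add ht0]; ring_nf
    have h2 : |t| ^ (2 : ℝ) = t ^ 2 := by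
      rw [show (2:ℝ) = ((2:ℕ):ℝ) by norm_num, Real.rpow_natCast, sq_abs]
    have h3 : |t| ^ (α - 2) ≤ δ ^ (α - 2) :=
      Real.rpow_le_rpow_of_nonpos hδ h.le (by linarith)
    have h4 : 0 ≤ δ ^ α := (Real.rpow_pos_of_pos hδ _).le
    have h5 : |t| ^ (α - 2) * t ^ 2 ≤ δ ^ (α - 2) * t ^ 2 :=
      mul_le_mul_of_nonneg_right h3 (sq_nonneg t)
    rw [h1, h2]
    linarith

/-- Bernstein approximation of an `α`-Hölder function:
`|f(x) - B_n f(x)| ≤ 2 L (x(1-x)/n)^{α/2}`, and in particular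
the uniform bound `2 L (4n)^{-α/2}`. -/
theorem bernstein_holder_bound (f : ℝ → ℝ) (α L : ℝ) (hα0 : 0 < α) (hα1 : α ≤ 1)
    (hL : 0 ≤ L)
    (hf : ∀ s ∈ Set.Icc (0:ℝ) 1, ∀ t ∈ Set.Icc (0:ℝ) 1, |f s - f t| ≤ L * |s - t| ^ α)
    (n : ℕ) (hn : 1 ≤ n) :
    (∀ x ∈ Set.Icc (0:ℝ) 1,
      |f x - ∑ k ∈ Finset.range (n + 1),
          f ((k : ℝ) / n) * (n.choose k : ℝ) * x ^ k * (1 - x) ^ (n - k)|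
        ≤ 2 * L * (x * (1 - x) / n) ^ (α / 2)) ∧
    (∀ x ∈ Set.Icc (0:ℝ) 1,
      |f x - ∑ k ∈ Finset.range (n + 1),
          f ((k : ℝ) / n) * (n.choose k : ℝ) * x ^ k * (1 - x) ^ (n - k)|
        ≤ 2 * L * ((4 * (n : ℝ)) ^ (-(α / 2)))) := by
  have hn0 : 0 < (n : ℝ) := by exact_mod_cast hn
  have main : ∀ x ∈ Set.Icc (0:ℝ) 1,
      |f x - ∑ k ∈ Finset.range (n + 1),
          f ((k : ℝ) / n) * (n.choose k : ℝ) * x ^ k * (1 - x) ^ (n - k)|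
        ≤ 2 * L * (x * (1 - x) / n) ^ (α / 2) := by
    intro x hx
    obtain ⟨hx0, hx1⟩ := hx
    set p : ℕ → ℝ := fun k => (n.choose k : ℝ) * x ^ k * (1 - x) ^ (n - k) with hp
    have hp0 : ∀ k, 0 ≤ p k := fun k => by
      have h1x : (0:ℝ) ≤ 1 - x := by linarith
      simp only [hp]
      positivity
    have hsum : ∑ k ∈ range (n + 1), p k = 1 := by
      have h := add_pow x (1 - x) n
      simp only [add_sub_cancel, one_pow] at h
      conv_rhs => rw [h]
      apply Finset.sum_congr rfl
      intro k _
      simp only [hp]; ring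
    set V : ℝ := x * (1 - x) / n with hVdef
    have hvar : ∑ k ∈ range (n + 1), (x - (k:ℝ)/n) ^ 2 * p k = V := by
      have hxI : x ∈ unitInterval := ⟨hx0, hx1⟩
      have h := bernstein.variance (n := n) (by omega) (x := ⟨x, hxI⟩)
      rw [← Fin.sum_univ_eq_sum_range]
      rw [show V = ((⟨x, hxI⟩ : unitInterval) : ℝ) * (1 - (⟨x, hxI⟩ : unitInterval)) / n from rfl,
        ← h]
      apply Finset.sum_congr rfl
      intro k _
      simp only [bernstein_apply, bernstein.z, hp]
    have hV0 : 0 ≤ V := by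
      rw [← hvar]
      exact Finset.sum_nonneg fun k _ => mul_nonneg (sq_nonneg _) (hp0 k)
    have hdiff : f x - ∑ k ∈ range (n + 1),
        f ((k : ℝ) / n) * (n.choose k : ℝ) * x ^ k * (1 - x) ^ (n - k)
        = ∑ k ∈ range (n + 1), (f x - f ((k:ℝ)/n)) * p k := by
      have h1 : f x = ∑ k ∈ range (n + 1), f x * p k := by
        rw [← Finset.mul_sum, hsum, mul_one]
      conv_lhs => rw [h1]
      rw [← Finset.sum_sub_distrib]
      apply Finset.sum_congr rfl
      intro k _
      simp only [hp]; ring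
    have step1 : |∑ k ∈ range (n + 1), (f x - f ((k:ℝ)/n)) * p k|
        ≤ ∑ k ∈ range (n + 1), L * |x - (k:ℝ)/n| ^ α * p k := by
      refine (Finset.abs_sum_le_sum_abs _ _).trans ?_
      apply Finset.sum_le_sum
      intro k hk
      rw [abs_mul, abs_of_nonneg (hp0 k)]
      refine mul_le_mul_of_nonneg_right ?_ (hp0 k)
      have hk' : (k : ℝ) ≤ n := by
        exact_mod_cast Nat.lt_succ_iff.mp (Finset.mem_range.mp hk)
      exact hf x ⟨hx0, hx1⟩ ((k:ℝ)/n) ⟨by positivity, by rw [div_le_one hn0]; exact hk'⟩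
    rw [hdiff]
    rcases eq_or_lt_of_le hV0 with hV | hV
    · -- V = 0 : every term vanishes
      have hz : ∀ k ∈ range (n + 1), (x - (k:ℝ)/n) ^ 2 * p k = 0 := by
        rw [← Finset.sum_eq_zero_iff_of_nonneg
          (fun k _ => mul_nonneg (sq_nonneg _) (hp0 k))]
        rw [hvar, ← hV]
      have hS : ∑ k ∈ range (n + 1), L * |x - (k:ℝ)/n| ^ α * p k = 0 := by
        apply Finset.sum_eq_zero
        intro k hk
        rcases mul_eq_zero.mp (hz k hk) with h | h
        · have : x - (k:ℝ)/n = 0 := by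
            exact sq_eq_zero_iff.mp h
          rw [this, abs_zero, Real.zero_rpow hα0.ne', mul_zero, zero_mul]
        · rw [h, mul_zero]
      have : (0:ℝ) = 2 * L * V ^ (α/2) := by
        rw [← hV, Real.zero_rpow (by positivity : α/2 ≠ 0), mul_zero]
      linarith [step1.trans_eq hS]
    · -- V > 0
      set δ : ℝ := V ^ ((1:ℝ)/2) with hδdef
      have hδ : 0 < δ := Real.rpow_pos_of_pos hV _
      have e1 : δ ^ α = V ^ (α/2) := by
        rw [hδdef, ← Real.rpow_mul hV0, show (1:ℝ)/2 * α = α/2 by ring]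
      have e2 : δ ^ (α - 2) * V = V ^ (α/2) := by
        rw [hδdef, ← Real.rpow_mul hV0]
        nth_rewrite 2 [← Real.rpow_one V]
        rw [← Real.rpow_add hV]
        congr 1
        ring
      have step2 : ∑ k ∈ range (n + 1), L * |x - (k:ℝ)/n| ^ α * p k
          ≤ L * (δ ^ α + δ ^ (α - 2) * V) := by
        have hterm : ∀ k ∈ range (n + 1),
            L * |x - (k:ℝ)/n| ^ α * p k
              ≤ L * (δ ^ α + δ ^ (α-2) * (x - (k:ℝ)/n) ^ 2) * p k := by
          intro k _
          refine mul_le_mul_of_nonneg_right ?_ (hp0 k)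
          exact mul_le_mul_of_nonneg_left (holder_pointwise hα0 hα1 hδ _) hL
        refine (Finset.sum_le_sum hterm).trans_eq ?_
        have expand : ∀ k : ℕ, L * (δ ^ α + δ ^ (α-2) * (x - (k:ℝ)/n) ^ 2) * p k
            = L * δ ^ α * p k + L * δ ^ (α-2) * ((x - (k:ℝ)/n) ^ 2 * p k) := by
          intro k; ring
        simp_rw [expand]
        rw [Finset.sum_add_distrib, ← Finset.mul_sum, ← Finset.mul_sum, hsum, hvar]
        ring
      have : L * (δ ^ α + δ ^ (α - 2) * V) = 2 * L * V ^ (α/2) := by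
        rw [e1, e2]; ring
      linarith [step1.trans (step2.trans_eq this)]
  refine ⟨main, ?_⟩
  intro x hx
  refine (main x hx).trans ?_
  obtain ⟨hx0, hx1⟩ := hx
  have h2L : (0:ℝ) ≤ 2 * L := by linarith
  refine mul_le_mul_of_nonneg_left ?_ h2L
  have hV0 : 0 ≤ x * (1 - x) / n := by
    have : (0:ℝ) ≤ 1 - x := by linarith
    positivity
  have hVle : x * (1 - x) / n ≤ (4 * (n:ℝ))⁻¹ := by
    have h4 : x * (1 - x) ≤ 1/4 := by nlinarith [sq_nonneg (2*x - 1)]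
    calc x * (1 - x) / n ≤ (1/4) / n := by gcongr
      _ = (4 * (n:ℝ))⁻¹ := by field_simp
  calc (x * (1 - x) / n) ^ (α/2) ≤ ((4 * (n:ℝ))⁻¹) ^ (α/2) :=
        Real.rpow_le_rpow hV0 hVle (by positivity)
    _ = (4 * (n:ℝ)) ^ (-(α/2)) := by
        rw [Real.inv_rpow (by positivity : (0:ℝ) ≤ 4 * n),
          Real.rpow_neg (by positivity : (0:ℝ) ≤ 4 * n)]
end

section
/- Let f be a C² function on [0,1] with |f''(t)| ≤ M for all t. Then for every x ∈ [0,1] and n ≥ 1, the Bernstein polynomial satisfies |f(x) − B_n f(x)| ≤ (M/2) · x(1−x)/n. -/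
open Set Finset Polynomial

private lemma hAux_deriv {f g : ℝ → ℝ} {c x t : ℝ} (hft : HasDerivAt f (g t) t) :
    HasDerivAt (fun u => f u - f x - g x * (u - x) - c * (u - x) ^ 2)
      (g t - g x - c * (2 * (t - x))) t := by
  have h1 : HasDerivAt (fun u : ℝ => u - x) 1 t := (hasDerivAt_id t).sub_const x
  have h2 : HasDerivAt (fun u => g x * (u - x)) (g x * 1) t := h1.const_mul (g x)
  have h3 : HasDerivAt (fun u => c * (u - x) ^ 2) (c * (2 * (t - x))) t := by
    have := h1.pow 2
    have h3' := this.const_mul c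
    exact h3'.congr_deriv (by push_cast; ring)
  have h4 := ((hft.sub_const (f x)).sub h2).sub h3
  exact h4.congr_deriv (by ring)

private lemma taylor2_bound {f g : ℝ → ℝ} {M : ℝ}
    (hfc : ContinuousOn f (Set.Icc (0:ℝ) 1))
    (hfd : ∀ t ∈ Set.Ioo (0:ℝ) 1, HasDerivAt f (g t) t)
    (hlip : ∀ a ∈ Set.Icc (0:ℝ) 1, ∀ b ∈ Set.Icc (0:ℝ) 1, |g a - g b| ≤ M * |a - b|)
    {x y : ℝ} (hx : x ∈ Set.Icc (0:ℝ) 1) (hy : y ∈ Set.Icc (0:ℝ) 1) :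
    |f y - f x - g x * (y - x)| ≤ M / 2 * (y - x) ^ 2 := by
  obtain ⟨hx0, hx1⟩ := hx
  obtain ⟨hy0, hy1⟩ := hy
  have hx' : x ∈ Set.Icc (0:ℝ) 1 := ⟨hx0, hx1⟩
  rcases le_total x y with hxy | hxy
  · -- x ≤ y
    have hD : Set.Icc x y ⊆ Set.Icc (0:ℝ) 1 := Set.Icc_subset_Icc hx0 hy1
    have hIoo : Set.Ioo x y ⊆ Set.Ioo (0:ℝ) 1 := fun t ht =>
      ⟨lt_of_le_of_lt hx0 ht.1, lt_of_lt_of_le ht.2 hy1⟩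
    have hcont : ∀ c : ℝ, ContinuousOn
        (fun u => f u - f x - g x * (u - x) - c * (u - x) ^ 2) (Set.Icc x y) := by
      intro c
      exact (((hfc.mono hD).sub continuousOn_const).sub (by fun_prop)).sub (by fun_prop)
    have hda : ∀ c : ℝ, ∀ t ∈ interior (Set.Icc x y),
        HasDerivWithinAt (fun u => f u - f x - g x * (u - x) - c * (u - x) ^ 2)
          (g t - g x - c * (2 * (t - x))) (interior (Set.Icc x y)) t := by
      intro c t ht
      rw [interior_Icc] at ht
      exact (hAux_deriv (hfd t (hIoo ht))).hasDerivWithinAt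
    have hgt : ∀ t ∈ interior (Set.Icc x y), |g t - g x| ≤ M * (t - x) := by
      intro t ht
      rw [interior_Icc] at ht
      obtain ⟨ht1, ht2⟩ := ht
      have := hlip t (hD ⟨le_of_lt ht1, le_of_lt ht2⟩) x hx'
      rwa [abs_of_nonneg (by linarith : (0:ℝ) ≤ t - x)] at this
    have hanti : AntitoneOn (fun u => f u - f x - g x * (u - x) - M / 2 * (u - x) ^ 2)
        (Set.Icc x y) := by
      refine antitoneOn_of_hasDerivWithinAt_nonpos (convex_Icc x y) (hcont _)
        (hda (M / 2)) ?_
      intro t ht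
      have h1 := hgt t ht
      have h2 := le_abs_self (g t - g x)
      nlinarith
    have hmono : MonotoneOn (fun u => f u - f x - g x * (u - x) - (-(M / 2)) * (u - x) ^ 2)
        (Set.Icc x y) := by
      refine monotoneOn_of_hasDerivWithinAt_nonneg (convex_Icc x y) (hcont _)
        (hda (-(M / 2))) ?_
      intro t ht
      have h1 := hgt t ht
      have h2 := neg_abs_le (g t - g x)
      nlinarith
    have e1 := hanti (Set.left_mem_Icc.2 hxy) (Set.right_mem_Icc.2 hxy) hxy
    have e2 := hmono (Set.left_mem_Icc.2 hxy) (Set.right_mem_Icc.2 hxy) hxy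
    simp only [sub_self, mul_zero, ne_eq, OfNat.ofNat_ne_zero, not_false_eq_true,
      zero_pow, sub_zero] at e1 e2
    rw [abs_le]
    constructor <;> nlinarith
  · -- y ≤ x
    have hD : Set.Icc y x ⊆ Set.Icc (0:ℝ) 1 := Set.Icc_subset_Icc hy0 hx1
    have hIoo : Set.Ioo y x ⊆ Set.Ioo (0:ℝ) 1 := fun t ht =>
      ⟨lt_of_le_of_lt hy0 ht.1, lt_of_lt_of_le ht.2 hx1⟩
    have hcont : ∀ c : ℝ, ContinuousOn
        (fun u => f u - f x - g x * (u - x) - c * (u - x) ^ 2) (Set.Icc y x) := by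
      intro c
      exact (((hfc.mono hD).sub continuousOn_const).sub (by fun_prop)).sub (by fun_prop)
    have hda : ∀ c : ℝ, ∀ t ∈ interior (Set.Icc y x),
        HasDerivWithinAt (fun u => f u - f x - g x * (u - x) - c * (u - x) ^ 2)
          (g t - g x - c * (2 * (t - x))) (interior (Set.Icc y x)) t := by
      intro c t ht
      rw [interior_Icc] at ht
      exact (hAux_deriv (hfd t (hIoo ht))).hasDerivWithinAt
    have hgt : ∀ t ∈ interior (Set.Icc y x), |g t - g x| ≤ M * (x - t) := by
      intro t ht
      rw [interior_Icc] at ht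
      obtain ⟨ht1, ht2⟩ := ht
      have := hlip t (hD ⟨le_of_lt ht1, le_of_lt ht2⟩) x hx'
      rwa [abs_of_nonpos (by linarith : t - x ≤ 0), neg_sub] at this
    have hmono : MonotoneOn (fun u => f u - f x - g x * (u - x) - M / 2 * (u - x) ^ 2)
        (Set.Icc y x) := by
      refine monotoneOn_of_hasDerivWithinAt_nonneg (convex_Icc y x) (hcont _)
        (hda (M / 2)) ?_
      intro t ht
      have h1 := hgt t ht
      have h2 := neg_abs_le (g t - g x)
      nlinarith
    have hanti : AntitoneOn (fun u => f u - f x - g x * (u - x) - (-(M / 2)) * (u - x) ^ 2)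
        (Set.Icc y x) := by
      refine antitoneOn_of_hasDerivWithinAt_nonpos (convex_Icc y x) (hcont _)
        (hda (-(M / 2))) ?_
      intro t ht
      have h1 := hgt t ht
      have h2 := le_abs_self (g t - g x)
      nlinarith
    have e1 := hmono (Set.left_mem_Icc.2 hxy) (Set.right_mem_Icc.2 hxy) hxy
    have e2 := hanti (Set.left_mem_Icc.2 hxy) (Set.right_mem_Icc.2 hxy) hxy
    simp only [sub_self, mul_zero, ne_eq, OfNat.ofNat_ne_zero, not_false_eq_true,
      zero_pow, sub_zero] at e1 e2
    rw [abs_le]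
    constructor <;> nlinarith

/-- Bernstein approximation of a `C²` function on `[0,1]` with `|f''| ≤ M`:
`|f(x) - B_n f(x)| ≤ (M/2) x(1-x)/n`. -/
theorem bernstein_C2_bound (f : ℝ → ℝ) (M : ℝ)
    (hf : ContDiffOn ℝ 2 f (Set.Icc (0:ℝ) 1))
    (hM : ∀ t ∈ Set.Icc (0:ℝ) 1, |iteratedDerivWithin 2 f (Set.Icc (0:ℝ) 1) t| ≤ M)
    (n : ℕ) (hn : 1 ≤ n) (x : ℝ) (hx : x ∈ Set.Icc (0:ℝ) 1) :
    |f x - ∑ k ∈ Finset.range (n + 1),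
        f ((k : ℝ) / n) * (n.choose k : ℝ) * x ^ k * (1 - x) ^ (n - k)|
      ≤ M / 2 * (x * (1 - x) / n) := by
  have hn0 : (0:ℝ) < n := by exact_mod_cast hn
  set s : Set ℝ := Set.Icc (0:ℝ) 1 with hs
  set g : ℝ → ℝ := derivWithin f s with hgdef
  have husub : UniqueDiffOn ℝ s := uniqueDiffOn_Icc one_pos
  have hfd1 : ∀ t ∈ s, HasDerivWithinAt f (g t) s t := fun t ht =>
    (hf.differentiableOn (by norm_num) t ht).hasDerivWithinAt
  have hfd : ∀ t ∈ Set.Ioo (0:ℝ) 1, HasDerivAt f (g t) t := fun t ht =>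
    (hfd1 t (Set.Ioo_subset_Icc_self ht)).hasDerivAt (Icc_mem_nhds ht.1 ht.2)
  have hg1 : ContDiffOn ℝ 1 g s := hf.derivWithin husub (by norm_num)
  have hgd : ∀ t ∈ s, HasDerivWithinAt g (derivWithin g s t) s t := fun t ht =>
    (hg1.differentiableOn one_ne_zero t ht).hasDerivWithinAt
  have hbound : ∀ t ∈ s, ‖derivWithin g s t‖ ≤ M := by
    intro t ht
    have h2 : iteratedDerivWithin 2 f s t = derivWithin g s t := by
      rw [iteratedDerivWithin_succ]
      exact derivWithin_congr (fun u hu => congrFun iteratedDerivWithin_one u)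
        (congrFun iteratedDerivWithin_one t)
    rw [Real.norm_eq_abs, ← h2]
    exact hM t ht
  have hlip : ∀ a ∈ s, ∀ b ∈ s, |g a - g b| ≤ M * |a - b| := by
    intro a ha b hb
    have := (convex_Icc (0:ℝ) 1).norm_image_sub_le_of_norm_hasDerivWithin_le hgd hbound hb ha
    simpa [Real.norm_eq_abs] using this
  have htay : ∀ y ∈ s, |f y - f x - g x * (y - x)| ≤ M / 2 * (y - x) ^ 2 := fun y hy =>
    taylor2_bound hf.continuousOn hfd hlip hx hy
  -- Bernstein identities
  set P : ℕ → ℝ := fun k => (bernsteinPolynomial ℝ n k).eval x with hPdef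
  have hPval : ∀ k, P k = (n.choose k : ℝ) * x ^ k * (1 - x) ^ (n - k) := by
    intro k; simp [hPdef, bernsteinPolynomial]
  have hP0 : ∀ k, 0 ≤ P k := by
    intro k
    rw [hPval]
    have h1 : (0:ℝ) ≤ x := hx.1
    have h2 : (0:ℝ) ≤ 1 - x := by linarith [hx.2]
    positivity
  have hsum : ∑ k ∈ Finset.range (n + 1), P k = 1 := by
    have h := congrArg (Polynomial.eval x) (bernsteinPolynomial.sum ℝ n)
    simpa [Polynomial.eval_finset_sum] using h
  have hsum1 : ∑ k ∈ Finset.range (n + 1), (k : ℝ) * P k = n * x := by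
    have h := congrArg (Polynomial.eval x) (bernsteinPolynomial.sum_smul ℝ n)
    simpa [Polynomial.eval_finset_sum, nsmul_eq_mul] using h
  have hvar : ∑ k ∈ Finset.range (n + 1), ((n : ℝ) * x - k) ^ 2 * P k = n * (x * (1 - x)) := by
    have h := congrArg (Polynomial.eval x) (bernsteinPolynomial.variance ℝ n)
    simpa [Polynomial.eval_finset_sum, nsmul_eq_mul, mul_assoc] using h
  have hvar2 : ∑ k ∈ Finset.range (n + 1), ((k : ℝ) / n - x) ^ 2 * P k = x * (1 - x) / n := by
    have he : ∀ k ∈ Finset.range (n + 1),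
        ((k : ℝ) / n - x) ^ 2 * P k = ((n : ℝ) * x - k) ^ 2 * P k / n ^ 2 := by
      intro k _
      have hne : (n:ℝ) ≠ 0 := ne_of_gt hn0
      rw [eq_div_iff (by positivity : ((n:ℝ))^2 ≠ 0)]
      field_simp
      ring
    rw [Finset.sum_congr rfl he, ← Finset.sum_div, hvar]
    field_simp
  have hmean : ∑ k ∈ Finset.range (n + 1), ((k : ℝ) / n - x) * P k = 0 := by
    have he : ∀ k ∈ Finset.range (n + 1),
        ((k : ℝ) / n - x) * P k = (1 / n) * ((k : ℝ) * P k) - x * P k := by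
      intro k _
      field_simp
    rw [Finset.sum_congr rfl he, Finset.sum_sub_distrib, ← Finset.mul_sum, ← Finset.mul_sum,
      hsum1, hsum]
    field_simp
    simp
  -- the key rewriting
  have key : f x - ∑ k ∈ Finset.range (n + 1),
      f ((k : ℝ) / n) * (n.choose k : ℝ) * x ^ k * (1 - x) ^ (n - k)
      = -∑ k ∈ Finset.range (n + 1),
          (f ((k : ℝ) / n) - f x - g x * ((k : ℝ) / n - x)) * P k := by
    have h1 : ∀ k ∈ Finset.range (n + 1),
        f ((k : ℝ) / n) * (n.choose k : ℝ) * x ^ k * (1 - x) ^ (n - k)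
          = f ((k : ℝ) / n) * P k := by
      intro k _
      rw [hPval]
      ring
    rw [Finset.sum_congr rfl h1]
    have h2 : ∑ k ∈ Finset.range (n + 1),
        (f ((k : ℝ) / n) - f x - g x * ((k : ℝ) / n - x)) * P k
        = ∑ k ∈ Finset.range (n + 1), f ((k : ℝ) / n) * P k
          - f x * ∑ k ∈ Finset.range (n + 1), P k
          - g x * ∑ k ∈ Finset.range (n + 1), ((k : ℝ) / n - x) * P k := by
      rw [Finset.mul_sum, Finset.mul_sum, ← Finset.sum_sub_distrib, ← Finset.sum_sub_distrib]
      refine Finset.sum_congr rfl fun k _ => by ring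
    rw [h2, hsum, hmean]
    ring
  rw [key, abs_neg]
  refine le_trans (Finset.abs_sum_le_sum_abs _ _) ?_
  have step : ∀ k ∈ Finset.range (n + 1),
      |(f ((k : ℝ) / n) - f x - g x * ((k : ℝ) / n - x)) * P k|
        ≤ M / 2 * (((k : ℝ) / n - x) ^ 2 * P k) := by
    intro k hk
    have hkn : (k : ℝ) ≤ n := by
      exact_mod_cast Nat.lt_succ_iff.1 (Finset.mem_range.1 hk)
    have hks : (k : ℝ) / n ∈ s := by
      constructor
      · positivity
      · rw [div_le_one hn0]; exact hkn
    rw [abs_mul, abs_of_nonneg (hP0 k)]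
    calc |f ((k : ℝ) / n) - f x - g x * ((k : ℝ) / n - x)| * P k
        ≤ (M / 2 * ((k : ℝ) / n - x) ^ 2) * P k :=
          mul_le_mul_of_nonneg_right (htay _ hks) (hP0 k)
      _ = M / 2 * (((k : ℝ) / n - x) ^ 2 * P k) := by ring
  refine le_trans (Finset.sum_le_sum step) ?_
  rw [← Finset.mul_sum, hvar2]
end
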